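/- There exists a function S from the ordinals to the class of finite sequences of ordinals (functions s : {0,…,k−1} → Ordinal for some k ∈ ℕ) such that: (a) S is surjective, i.e., every finite sequence of ordinals equals S(ξ) for some ordinal ξ; and (b) S is weakly increasing with respect to ≺*: whenever ξ < ζ, either S(ξ) = S(ζ) or S(ξ) ≺* S(ζ) (comparing graphs). -/

import Mathlib

universe u

/-- The well-order `≺` on `ℕ × Ord`: `(m, α) ≺ (n, β)` iff `α < β`, or
`α = β` and `m < n`. -/
def precPair (x y : ℕ × Ordinal.{u}) : Prop :=
  x.2 < y.2 ∨ (x.2 = y.2 ∧ x.1 < y.1)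

/-- The canonical well-order `≺*` "by largest difference" on finite subsets of
`ℕ × Ord`: `s ≺* s'` iff there is `x ∈ s' \ s` with
`{y ∈ s | y ≻ x} = {y ∈ s' | y ≻ x}`. -/
def precStar (s s' : Finset (ℕ × Ordinal.{u})) : Prop :=
  ∃ x ∈ s', x ∉ s ∧
    {y : ℕ × Ordinal.{u} | y ∈ s ∧ precPair x y} =
    {y : ℕ × Ordinal.{u} | y ∈ s' ∧ precPair x y}

/-- The graph of a finite sequence `s : {0, …, k−1} → Ord` of ordinals, as a
finite subset of `ℕ × Ord`. -/
noncomputable def sgraph (s : Σ k : ℕ, Fin k → Ordinal.{u}) : Finset (ℕ × Ordinal.{u}) :=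
  Finset.univ.image fun i : Fin s.1 => ((i : ℕ), s.2 i)

namespace PrecAux

noncomputable section

open Ordinal

/-- Rank of a pair in the `≺` order. -/
def rk (x : ℕ × Ordinal.{u}) : Ordinal.{u} := Ordinal.omega0 * x.2 + x.1

theorem rk_lt_of_precPair {x y : ℕ × Ordinal.{u}} (h : precPair x y) : rk x < rk y := by
  obtain ⟨m, α⟩ := x; obtain ⟨n, β⟩ := y
  rcases h with h | ⟨h, hmn⟩
  · calc Ordinal.omega0 * α + (m : Ordinal.{u})
        < Ordinal.omega0 * α + Ordinal.omega0 :=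
          add_lt_add_right (Ordinal.nat_lt_omega0 m) _
      _ = Ordinal.omega0 * (α + 1) := by rw [mul_add, mul_one]
      _ ≤ Ordinal.omega0 * β := mul_le_mul_right (Order.add_one_le_of_lt h) _
      _ ≤ Ordinal.omega0 * β + (n : Ordinal.{u}) := le_add_right le_rfl
  · have h' : α = β := h
    have hmn' : m < n := hmn
    simp only [rk, h']
    exact add_lt_add_right (by exact_mod_cast hmn') _

theorem precPair_trichot (x y : ℕ × Ordinal.{u}) : x = y ∨ precPair x y ∨ precPair y x := by
  obtain ⟨m, α⟩ := x; obtain ⟨n, β⟩ := y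
  rcases lt_trichotomy α β with h | h | h
  · exact Or.inr (Or.inl (Or.inl h))
  · rcases lt_trichotomy m n with h' | h' | h'
    · exact Or.inr (Or.inl (Or.inr ⟨h, h'⟩))
    · exact Or.inl (by simp [h, h'])
    · exact Or.inr (Or.inr (Or.inr ⟨h.symm, h'⟩))
  · exact Or.inr (Or.inr (Or.inl h))

theorem rk_injective : Function.Injective (rk.{u}) := by
  intro x y h
  rcases precPair_trichot x y with h' | h' | h'
  · exact h'
  · exact absurd h (ne_of_lt (rk_lt_of_precPair h'))
  · exact absurd h.symm (ne_of_lt (rk_lt_of_precPair h'))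

theorem rk_lt_iff {x y : ℕ × Ordinal.{u}} : rk x < rk y ↔ precPair x y := by
  constructor
  · intro h
    rcases precPair_trichot x y with h' | h' | h'
    · subst h'; exact absurd h (lt_irrefl _)
    · exact h'
    · exact absurd (rk_lt_of_precPair h') (lt_asymm h)
  · exact rk_lt_of_precPair

/-- Value of a (descending) list of ordinals. -/
def oval : List Ordinal.{u} → Ordinal.{u}
  | [] => 0
  | a :: l => 2 ^ a + oval l

theorem oval_append (l₁ l₂ : List Ordinal.{u}) : oval (l₁ ++ l₂) = oval l₁ + oval l₂ := by
  induction l₁ with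
  | nil => simp [oval]
  | cons a l ih => simp [oval, ih, add_assoc]

theorem oval_lt :
    ∀ {l : List Ordinal.{u}}, l.Pairwise (· > ·) →
      ∀ {β : Ordinal.{u}}, (∀ a ∈ l, a < β) → oval l < 2 ^ β := by
  intro l
  induction l with
  | nil =>
    intro _ β _
    simpa [oval] using Ordinal.opow_pos β (by norm_num : (0 : Ordinal.{u}) < 2)
  | cons a l ih =>
    intro hs β hb
    have hs' := List.pairwise_cons.mp hs
    have hlt : oval l < 2 ^ a := ih hs'.2 (fun b hb' => hs'.1 b hb')
    have ha : a < β := hb a (List.mem_cons_self (a := a) (l := l))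
    calc oval (a :: l) = 2 ^ a + oval l := rfl
      _ < 2 ^ a + 2 ^ a := add_lt_add_right hlt _
      _ = 2 ^ a * 2 := by
          rw [(by norm_num : (2 : Ordinal.{u}) = 1 + 1), mul_add, mul_one]
      _ = 2 ^ (a + 1) := by rw [Ordinal.opow_add, Ordinal.opow_one]
      _ ≤ 2 ^ β := Ordinal.opow_le_opow_right (by norm_num) (Order.add_one_le_of_lt ha)

/-- Value of a finite set of ordinals. -/
def fval (T : Finset Ordinal.{u}) : Ordinal.{u} := oval (T.sort (· ≥ ·))

theorem sorted_gt_sort (T : Finset Ordinal.{u}) : (T.sort (· ≥ ·)).Pairwise (· > ·) := by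
  have h1 := Finset.pairwise_sort (α := Ordinal.{u}) T (· ≥ ·)
  have h2 := Finset.sort_nodup (α := Ordinal.{u}) T (· ≥ ·)
  exact (h1.and h2).imp (fun {a b} h => lt_of_le_of_ne h.1 (Ne.symm h.2))

theorem fval_eq_oval {T : Finset Ordinal.{u}} {l : List Ordinal.{u}} (hs : l.Pairwise (· > ·))
    (hT : l.toFinset = T) : fval T = oval l := by
  have hnd : l.Nodup := hs.nodup
  have hnd' := Finset.sort_nodup (α := Ordinal.{u}) T (· ≥ ·)
  have hperm : (T.sort (· ≥ ·)).Perm l :=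
    List.perm_of_nodup_nodup_toFinset_eq hnd' hnd (by rw [Finset.sort_toFinset, hT])
  have heq : T.sort (· ≥ ·) = l :=
    List.Perm.eq_of_pairwise' (Finset.pairwise_sort _ _) (hs.imp fun h => le_of_lt h) hperm
  rw [fval, heq]

theorem fval_split (T : Finset Ordinal.{u}) (β : Ordinal.{u}) :
    fval T = fval (T.filter (β < ·)) + fval (T.filter (fun γ => ¬ β < γ)) := by
  set A := T.filter (β < ·) with hA
  set B := T.filter (fun γ => ¬ β < γ) with hB
  have hs : (A.sort (· ≥ ·) ++ B.sort (· ≥ ·)).Pairwise (· > ·) := by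
    rw [List.pairwise_append]
    refine ⟨sorted_gt_sort A, sorted_gt_sort B, ?_⟩
    intro a ha b hb
    rw [Finset.mem_sort] at ha hb
    have h1 : β < a := (Finset.mem_filter.mp ha).2
    have h2 : ¬ β < b := (Finset.mem_filter.mp hb).2
    exact lt_of_le_of_lt (not_lt.mp h2) h1
  have hT : (A.sort (· ≥ ·) ++ B.sort (· ≥ ·)).toFinset = T := by
    rw [List.toFinset_append, Finset.sort_toFinset, Finset.sort_toFinset, hA, hB]
    exact Finset.filter_union_filter_not_eq _ T
  rw [fval_eq_oval hs hT, oval_append]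
  rfl

theorem fval_lt_of_cond {T T' : Finset Ordinal.{u}} {β : Ordinal.{u}}
    (hβ' : β ∈ T') (hβ : β ∉ T) (hf : T.filter (β < ·) = T'.filter (β < ·)) :
    fval T < fval T' := by
  rw [fval_split T β, fval_split T' β, hf]
  refine add_lt_add_right ?_ _
  have h1 : fval (T.filter (fun γ => ¬ β < γ)) < 2 ^ β := by
    apply oval_lt (sorted_gt_sort _)
    intro a ha
    rw [Finset.mem_sort] at ha
    obtain ⟨haT, hale⟩ := Finset.mem_filter.mp ha
    exact lt_of_le_of_ne (not_lt.mp hale) (fun h => hβ (h ▸ haT))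
  have h2 : 2 ^ β ≤ fval (T'.filter (fun γ => ¬ β < γ)) := by
    set B := T'.filter (fun γ => ¬ β < γ) with hBdef
    have hβB : β ∈ B := Finset.mem_filter.mpr ⟨hβ', lt_irrefl β⟩
    have hβl : β ∈ B.sort (· ≥ ·) := (Finset.mem_sort _).mpr hβB
    cases hl : B.sort (· ≥ ·) with
    | nil => rw [hl] at hβl; simp at hβl
    | cons a l' =>
      have haB : a ∈ B := by
        rw [← Finset.mem_sort (· ≥ ·), hl]; exact List.mem_cons_self (a := a) (l := l')
      have haβ : a ≤ β := not_lt.mp (Finset.mem_filter.mp haB).2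
      have hsrt := Finset.pairwise_sort B (· ≥ ·)
      rw [hl] at hβl hsrt
      have haeq : a = β := by
        rcases List.mem_cons.mp hβl with h | h
        · exact h.symm
        · exact le_antisymm haβ ((List.pairwise_cons.mp hsrt).1 β h)
      have : fval B = 2 ^ a + oval l' := by rw [fval, hl]; rfl
      rw [this, haeq]
      exact le_add_right le_rfl
  exact lt_of_lt_of_le h1 h2

theorem condT_total {T T' : Finset Ordinal.{u}} (h : T ≠ T') :
    (∃ β ∈ T', β ∉ T ∧ T.filter (β < ·) = T'.filter (β < ·)) ∨
    (∃ β ∈ T, β ∉ T' ∧ T'.filter (β < ·) = T.filter (β < ·)) := by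
  set D := (T \ T') ∪ (T' \ T) with hD
  have hDne : D.Nonempty := by
    rw [Finset.nonempty_iff_ne_empty]
    intro hc
    rw [hD, Finset.union_eq_empty, Finset.sdiff_eq_empty_iff_subset,
      Finset.sdiff_eq_empty_iff_subset] at hc
    exact h (le_antisymm hc.1 hc.2)
  set β := D.max' hDne with hβdef
  have hβD : β ∈ D := Finset.max'_mem _ hDne
  have hmem : ∀ γ, β < γ → (γ ∈ T ↔ γ ∈ T') := by
    intro γ hγ
    have hγD : γ ∉ D := fun hγD => absurd (Finset.le_max' D γ hγD) (not_le.mpr hγ)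
    rw [hD, Finset.mem_union, Finset.mem_sdiff, Finset.mem_sdiff] at hγD
    push_neg at hγD
    exact ⟨fun h' => hγD.1 h', fun h' => hγD.2 h'⟩
  have hfil : T.filter (β < ·) = T'.filter (β < ·) := by
    ext γ
    simp only [Finset.mem_filter]
    constructor
    · rintro ⟨h1, h2⟩; exact ⟨(hmem γ h2).mp h1, h2⟩
    · rintro ⟨h1, h2⟩; exact ⟨(hmem γ h2).mpr h1, h2⟩
  rw [hD, Finset.mem_union, Finset.mem_sdiff, Finset.mem_sdiff] at hβD
  rcases hβD with ⟨h1, h2⟩ | ⟨h1, h2⟩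
  · exact Or.inr ⟨β, h1, h2, hfil.symm⟩
  · exact Or.inl ⟨β, h1, h2, hfil⟩

theorem precStar_iff {s s' : Finset (ℕ × Ordinal.{u})} :
    precStar s s' ↔ ∃ β ∈ s'.image rk, β ∉ s.image rk ∧
      (s.image rk).filter (β < ·) = (s'.image rk).filter (β < ·) := by
  constructor
  · rintro ⟨x, hx', hxs, hset⟩
    refine ⟨rk x, Finset.mem_image_of_mem _ hx', ?_, ?_⟩
    · intro hc
      obtain ⟨y, hy, hyx⟩ := Finset.mem_image.mp hc
      exact hxs ((rk_injective hyx) ▸ hy)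
    · ext γ
      simp only [Finset.mem_filter, Finset.mem_image]
      constructor
      · rintro ⟨⟨y, hy, rfl⟩, hlt⟩
        have hp : precPair x y := rk_lt_iff.mp hlt
        have : y ∈ {y : ℕ × Ordinal.{u} | y ∈ s' ∧ precPair x y} := hset ▸ ⟨hy, hp⟩
        exact ⟨⟨y, this.1, rfl⟩, hlt⟩
      · rintro ⟨⟨y, hy, rfl⟩, hlt⟩
        have hp : precPair x y := rk_lt_iff.mp hlt
        have : y ∈ {y : ℕ × Ordinal.{u} | y ∈ s ∧ precPair x y} := hset.symm ▸ ⟨hy, hp⟩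
        exact ⟨⟨y, this.1, rfl⟩, hlt⟩
  · rintro ⟨β, hβ', hβ, hfil⟩
    obtain ⟨x, hx', rfl⟩ := Finset.mem_image.mp hβ'
    refine ⟨x, hx', fun hc => hβ (Finset.mem_image_of_mem _ hc), ?_⟩
    ext y
    simp only [Set.mem_setOf_eq]
    constructor
    · rintro ⟨hy, hp⟩
      have h1 : rk y ∈ (s.image rk).filter (rk x < ·) :=
        Finset.mem_filter.mpr ⟨Finset.mem_image_of_mem _ hy, rk_lt_iff.mpr hp⟩
      rw [hfil] at h1
      obtain ⟨z, hz, hzy⟩ := Finset.mem_image.mp (Finset.mem_filter.mp h1).1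
      exact ⟨(rk_injective hzy) ▸ hz, hp⟩
    · rintro ⟨hy, hp⟩
      have h1 : rk y ∈ (s'.image rk).filter (rk x < ·) :=
        Finset.mem_filter.mpr ⟨Finset.mem_image_of_mem _ hy, rk_lt_iff.mpr hp⟩
      rw [← hfil] at h1
      obtain ⟨z, hz, hzy⟩ := Finset.mem_image.mp (Finset.mem_filter.mp h1).1
      exact ⟨(rk_injective hzy) ▸ hz, hp⟩

theorem sgraph_card (k : ℕ) (f : Fin k → Ordinal.{u}) : (sgraph ⟨k, f⟩).card = k := by
  rw [sgraph, Finset.card_image_of_injective _ ?_, Finset.card_univ, Fintype.card_fin]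
  intro i j hij
  exact Fin.ext (by exact_mod_cast congrArg Prod.fst hij)

theorem sgraph_injective : Function.Injective (sgraph.{u}) := by
  rintro ⟨k, f⟩ ⟨k', g⟩ h
  have hk : k = k' := by rw [← sgraph_card k f, ← sgraph_card k' g, h]
  subst hk
  have hfg : f = g := by
    funext i
    have hmem : ((i : ℕ), f i) ∈ sgraph ⟨k, g⟩ := by
      rw [← h, sgraph]
      exact Finset.mem_image_of_mem _ (Finset.mem_univ i)
    rw [sgraph] at hmem
    obtain ⟨j, _, hj⟩ := Finset.mem_image.mp hmem
    have hji : j = i := Fin.ext (congrArg Prod.fst hj)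
    subst hji
    exact (congrArg Prod.snd hj).symm
  rw [hfg]

/-- The rank of a finite sequence of ordinals. -/
def rho (a : Σ k : ℕ, Fin k → Ordinal.{u}) : Ordinal.{u} := fval ((sgraph a).image rk)

theorem key {a b : Σ k : ℕ, Fin k → Ordinal.{u}} (h : a ≠ b) :
    (precStar (sgraph a) (sgraph b) ∧ rho a < rho b) ∨
    (precStar (sgraph b) (sgraph a) ∧ rho b < rho a) := by
  have hg : sgraph a ≠ sgraph b := fun e => h (sgraph_injective e)
  have hT : (sgraph a).image rk ≠ (sgraph b).image rk :=
    fun e => hg (Finset.image_injective rk_injective e)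
  rcases condT_total hT with ⟨β, h1, h2, h3⟩ | ⟨β, h1, h2, h3⟩
  · exact Or.inl ⟨precStar_iff.mpr ⟨β, h1, h2, h3⟩, fval_lt_of_cond h1 h2 h3⟩
  · exact Or.inr ⟨precStar_iff.mpr ⟨β, h1, h2, h3⟩, fval_lt_of_cond h1 h2 h3⟩

theorem rho_injective : Function.Injective (rho.{u}) := by
  intro a b h
  by_contra hne
  rcases key hne with ⟨_, hlt⟩ | ⟨_, hlt⟩
  · exact absurd h (ne_of_lt hlt)
  · exact absurd h.symm (ne_of_lt hlt)

theorem rho_unbounded : ¬ BddAbove (Set.range (rho.{u})) := by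
  rintro ⟨b, hb⟩
  have h1 : rho ⟨1, fun _ => b + 1⟩ ≤ b := hb (Set.mem_range_self _)
  have hg : sgraph ⟨1, fun _ => b + 1⟩ = {((0 : ℕ), b + 1)} := by
    ext x
    simp only [sgraph, Finset.mem_image, Finset.mem_univ, true_and, Finset.mem_singleton]
    constructor
    · rintro ⟨i, rfl⟩
      rw [Subsingleton.elim i 0]
      rfl
    · rintro rfl
      exact ⟨0, rfl⟩
  have himg : (sgraph ⟨1, fun _ => b + 1⟩).image rk = {rk ((0 : ℕ), b + 1)} := by
    rw [hg, Finset.image_singleton]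
  have hrk : rk ((0 : ℕ), b + 1) = Ordinal.omega0 * (b + 1) := by
    simp [rk]
  have hval : rho ⟨1, fun _ => b + 1⟩ = 2 ^ (Ordinal.omega0 * (b + 1)) := by
    rw [rho, himg, hrk]
    rw [fval_eq_oval (l := [Ordinal.omega0 * (b + 1)]) (by simp) (by simp)]
    simp [oval]
  have h2 : b < rho ⟨1, fun _ => b + 1⟩ := by
    rw [hval]
    calc b < b + 1 := lt_add_one b
      _ = 1 * (b + 1) := (one_mul _).symm
      _ ≤ Ordinal.omega0 * (b + 1) := mul_le_mul_left Ordinal.one_lt_omega0.le _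
      _ ≤ 2 ^ (Ordinal.omega0 * (b + 1)) := Ordinal.right_le_opow _ one_lt_two
  exact absurd h1 (not_le.mpr h2)

end

end PrecAux

/-- There is a surjective enumeration `S : Ord → Ord^{<ω}` of all finite
sequences of ordinals which is weakly increasing with respect to `≺*`. -/
theorem exists_precStar_monotone_enumeration :
    ∃ S : Ordinal.{u} → Σ k : ℕ, Fin k → Ordinal.{u},
      Function.Surjective S ∧
      ∀ ξ ζ : Ordinal.{u}, ξ < ζ →
        S ξ = S ζ ∨ precStar (sgraph (S ξ)) (sgraph (S ζ)) := by
  classical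
  have hub := PrecAux.rho_unbounded.{u}
  have hmem : ∀ ξ : Ordinal.{u}, ∃ a, PrecAux.rho a = Ordinal.enumOrd (Set.range PrecAux.rho) ξ := by
    intro ξ
    exact Ordinal.enumOrd_mem hub ξ
  choose S hS using hmem
  refine ⟨S, ?_, ?_⟩
  · intro a
    have hmem2 : PrecAux.rho a ∈ Set.range (Ordinal.enumOrd (Set.range PrecAux.rho)) := by
      rw [Ordinal.range_enumOrd hub]
      exact Set.mem_range_self a
    obtain ⟨ξ, hξ⟩ := hmem2
    exact ⟨ξ, PrecAux.rho_injective (by rw [hS ξ, hξ])⟩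
  · intro ξ ζ hlt
    by_cases he : S ξ = S ζ
    · exact Or.inl he
    · have hr : PrecAux.rho (S ξ) < PrecAux.rho (S ζ) := by
        rw [hS ξ, hS ζ]
        exact Ordinal.enumOrd_strictMono hub hlt
      rcases PrecAux.key he with ⟨h, _⟩ | ⟨_, h⟩
      · exact Or.inr h
      · exact absurd hr (lt_asymm h)
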